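/- Let A be a b×b matrix over ℚ and let B = A + I. Then in the formal power series ring ℚ[[h]]: Σ_{k≥2} Σ_{ν=1}^{k−1} (λ_{k,ν}/k) · h^k · Tr(A^ν B^{k−ν}) = −h·Tr(A) − Tr( Ln( I + (1 − e^h) A ) ), where Ln(I + H) = Σ_{m≥1} (−1)^{m−1} H^m / m, applied to the matrix H = (1−e^h)·A whose entries are power series in h with zero constant term. Note B − e^h A = I + (1−e^h)A. -/

import Mathlib

/-- The number of ascents of a permutation `σ` of `Fin m`, i.e. the number of
indices `i` with `i+1 < m` and `σ i < σ (i+1)`. -/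
def ascents {m : ℕ} (σ : Equiv.Perm (Fin m)) : ℕ :=
  (Finset.univ.filter fun i : Fin m =>
    ∃ h : (i : ℕ) + 1 < m, σ i < σ ⟨(i : ℕ) + 1, h⟩).card

/-- `lam k ν` is the proportion of permutations of `{1, …, k-1}` with exactly `ν - 1`
ascents: `λ_{k,ν} = (1/(k-1)!) · #{σ ∈ S_{k-1} : #ascents(σ) = ν-1}`. -/
noncomputable def lam (k ν : ℕ) : ℚ :=
  ((Finset.univ.filter fun σ : Equiv.Perm (Fin (k - 1)) => ascents σ = ν - 1).card : ℚ) /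
    ((k - 1).factorial : ℚ)


/-- The formal logarithm `Ln(M) = Σ_{m≥1} (−1)^{m−1}(M−I)^m/m` of a matrix `M` over `ℚ[[h]]`
whose entries have constant term given by the identity matrix: since the entries of
`(M−I)^m` vanish below degree `m`, the coefficient of `h^a` only involves `m ≤ a`. -/
noncomputable def matLn {N : Type*} [Fintype N] [DecidableEq N]
    (M : Matrix N N (PowerSeries ℚ)) : Matrix N N (PowerSeries ℚ) :=
  Matrix.of fun i j => PowerSeries.mk fun a =>
    ∑ m ∈ Finset.Icc 1 a, ((-1 : ℚ) ^ (m - 1) / (m : ℚ)) *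
      PowerSeries.coeff (R := ℚ) a (((M - 1) ^ m) i j)

open Finset





/-- number of permutations of `Fin n` with `a` ascents -/
def Eul (n a : ℕ) : ℕ :=
  ((univ : Finset (Equiv.Perm (Fin n))).filter fun σ => ascents σ = a).card

lemma ascents_eq {n : ℕ} (σ : Equiv.Perm (Fin (n+1))) :
    ascents σ = #(univ.filter fun i : Fin n => σ i.castSucc < σ i.succ) := by
  classical
  unfold ascents
  refine (Finset.card_bij (fun i _ => i.castSucc) ?_ ?_ ?_).symm
  · intro i hi
    simp only [mem_filter, mem_univ, true_and] at hi ⊢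
    have hlt : (i.castSucc : ℕ) + 1 < n + 1 := by
      simp only [Fin.coe_castSucc]; omega
    refine ⟨hlt, ?_⟩
    have : (⟨(i.castSucc : ℕ) + 1, hlt⟩ : Fin (n+1)) = i.succ := rfl
    rw [this]
    exact hi
  · intro i _ j _ h
    exact Fin.castSucc_injective _ h
  · intro i hi
    simp only [mem_filter, mem_univ, true_and] at hi
    obtain ⟨h, hlt⟩ := hi
    refine ⟨⟨(i : ℕ), by omega⟩, ?_, ?_⟩
    · simp only [mem_filter, mem_univ, true_and]
      have h1 : (⟨(i : ℕ), by omega⟩ : Fin n).castSucc = i := by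
        ext; simp
      have h2 : (⟨(i : ℕ), by omega⟩ : Fin n).succ = ⟨(i : ℕ) + 1, h⟩ := by
        ext; simp
      rw [h1, h2]; exact hlt
    · ext; simp

lemma ascents_le {n : ℕ} (σ : Equiv.Perm (Fin (n+1))) : ascents σ ≤ n := by
  rw [ascents_eq]
  calc #(univ.filter fun i : Fin n => σ i.castSucc < σ i.succ) ≤ #(univ : Finset (Fin n)) :=
        card_filter_le _ _
    _ = n := by simp

lemma ascents_trans_rev {n : ℕ} (σ : Equiv.Perm (Fin (n+1))) :
    ascents (σ.trans Fin.revPerm) = n - ascents σ := by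
  classical
  rw [ascents_eq, ascents_eq]
  have h1 : (univ.filter fun i : Fin n => (σ.trans Fin.revPerm) i.castSucc <
      (σ.trans Fin.revPerm) i.succ)
      = univ.filter fun i : Fin n => ¬ (σ i.castSucc < σ i.succ) := by
    apply filter_congr
    intro i _
    simp only [Equiv.trans_apply, Fin.revPerm_apply, Fin.rev_lt_rev]
    have hne : σ i.castSucc ≠ σ i.succ := by
      intro h
      exact absurd (σ.injective h) (Fin.castSucc_lt_succ (i := i)).ne
    constructor
    · exact fun h => not_lt_of_gt h
    · intro h
      exact (hne.lt_or_gt).resolve_left h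
  rw [h1, filter_not, card_sdiff_of_subset (filter_subset _ _)]
  simp

lemma Eul_symm (n a : ℕ) (h : a ≤ n) : Eul (n+1) a = Eul (n+1) (n - a) := by
  classical
  unfold Eul
  refine Finset.card_bij (fun σ _ => σ.trans Fin.revPerm) ?_ ?_ ?_
  · intro σ hσ
    simp only [mem_filter, mem_univ, true_and] at hσ ⊢
    rw [ascents_trans_rev, hσ]
  · intro σ _ τ _ hst
    have : ∀ i, σ i = τ i := by
      intro i
      have := congrArg (fun e => (e : Equiv.Perm (Fin (n+1))) i) hst
      simp only [Equiv.trans_apply, Fin.revPerm_apply] at this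
      exact Fin.rev_injective this
    exact Equiv.ext this
  · intro τ hτ
    simp only [mem_filter, mem_univ, true_and] at hτ
    refine ⟨τ.trans Fin.revPerm, ?_, ?_⟩
    · simp only [mem_filter, mem_univ, true_and]
      rw [ascents_trans_rev, hτ]
      omega
    · ext i
      simp [Fin.rev_rev]

lemma sum_perm_eq_sum_Eul {n : ℕ} (g : ℕ → ℚ) :
    ∑ σ : Equiv.Perm (Fin (n+1)), g (ascents σ)
      = ∑ a ∈ range (n+1), (Eul (n+1) a : ℚ) * g a := by
  classical
  rw [← Finset.sum_fiberwise_of_maps_to (g := fun σ : Equiv.Perm (Fin (n+1)) => ascents σ)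
      (t := range (n+1)) (fun σ _ => by simp [Nat.lt_succ_iff, ascents_le σ])]
  refine Finset.sum_congr rfl fun a _ => ?_
  rw [Finset.sum_congr rfl (fun σ hσ => by
      rw [(mem_filter.mp hσ).2]), Finset.sum_const, Eul]
  simp [mul_comm]



/-- `S p r x = Σ_{i≤p} (-1)^i C(p,i) C(x+i,r)` -/
noncomputable def fdS (p r x : ℕ) : ℚ :=
  ∑ i ∈ range (p+1), (-1:ℚ)^i * (p.choose i : ℚ) * ((x+i).choose r : ℚ)

lemma fdS_rec_p (p r x : ℕ) : fdS (p+1) r x = fdS p r x - fdS p r (x+1) := by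
  unfold fdS
  rw [Finset.sum_range_succ' (fun i => (-1:ℚ)^i * ((p+1).choose i : ℚ) * ((x+i).choose r : ℚ)) (p+1)]
  have step : ∀ i ∈ range (p+1),
      (-1:ℚ)^(i+1) * ((p+1).choose (i+1) : ℚ) * ((x+(i+1)).choose r : ℚ)
        = (-1:ℚ)^(i+1) * (p.choose (i+1) : ℚ) * ((x+(i+1)).choose r : ℚ)
          - (-1:ℚ)^i * (p.choose i : ℚ) * (((x+1)+i).choose r : ℚ) := by
    intro i _
    have h1 : (p+1).choose (i+1) = p.choose i + p.choose (i+1) := Nat.choose_succ_succ p i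
    have h2 : x + (i+1) = (x+1) + i := by ring
    rw [h1, h2]
    push_cast
    ring
  rw [Finset.sum_congr rfl step, Finset.sum_sub_distrib]
  have reassemble :
      (∑ i ∈ range (p+1), (-1:ℚ)^(i+1) * (p.choose (i+1) : ℚ) * ((x+(i+1)).choose r : ℚ))
        + (-1:ℚ)^0 * ((p+1).choose 0 : ℚ) * ((x+0).choose r : ℚ)
      = fdS p r x := by
    have h0 : ((-1:ℚ)^0 * ((p+1).choose 0 : ℚ) * ((x+0).choose r : ℚ))
        = (-1:ℚ)^0 * (p.choose 0 : ℚ) * ((x+0).choose r : ℚ) := by simp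
    rw [h0, ← Finset.sum_range_succ'
      (fun i => (-1:ℚ)^i * (p.choose i : ℚ) * ((x+i).choose r : ℚ)) (p+1)]
    unfold fdS
    rw [Finset.sum_range_succ]
    simp [Nat.choose_succ_self]
  unfold fdS at reassemble
  linarith [reassemble]

lemma fdS_rec_r (p r x : ℕ) : fdS p (r+1) (x+1) = fdS p (r+1) x + fdS p r x := by
  unfold fdS
  rw [← Finset.sum_add_distrib]
  refine Finset.sum_congr rfl fun i _ => ?_
  have h2 : (x+1) + i = (x+i) + 1 := by ring
  rw [h2, Nat.choose_succ_succ (x+i) r]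
  push_cast
  ring

lemma fdS_eq (p : ℕ) : ∀ r x : ℕ,
    fdS p r x = if p ≤ r then (-1:ℚ)^p * ((x.choose (r-p) : ℕ) : ℚ) else 0 := by
  induction p with
  | zero => intro r x; simp [fdS]
  | succ p ih =>
    intro r x
    match r with
    | 0 =>
      have : fdS (p+1) 0 x = ∑ i ∈ range (p+2), (-1:ℚ)^i * ((p+1).choose i : ℚ) := by
        unfold fdS
        exact Finset.sum_congr rfl fun i _ => by simp
      rw [this]
      have hz := Int.alternating_sum_range_choose (n := p+1)
      rw [if_neg (by omega)] at hz ⊢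
      have : ((∑ i ∈ range (p+2), (-1:ℤ)^i * ((p+1).choose i : ℤ) : ℤ) : ℚ)
          = ∑ i ∈ range (p+2), (-1:ℚ)^i * ((p+1).choose i : ℚ) := by push_cast; rfl
      rw [← this, hz]; norm_num
    | r'+1 =>
      have h1 := fdS_rec_p p (r'+1) x
      have h2 := fdS_rec_r p r' x
      have : fdS (p+1) (r'+1) x = - fdS p r' x := by rw [h1, h2]; ring
      rw [this, ih r' x]
      by_cases hpr : p ≤ r'
      · rw [if_pos hpr, if_pos (by omega)]
        have : r' + 1 - (p + 1) = r' - p := by omega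
        rw [this]; ring
      · rw [if_neg hpr, if_neg (by omega)]; ring






/-- number of ascent positions of `σ` strictly below `i` -/
def ascBelow {n : ℕ} (σ : Equiv.Perm (Fin (n+1))) (i : Fin (n+1)) : ℕ :=
  #(Finset.univ.filter fun j : Fin n => j.castSucc < i ∧ σ j.castSucc < σ j.succ)

lemma ascBelow_le_ascents {n : ℕ} (σ : Equiv.Perm (Fin (n+1))) (i : Fin (n+1)) :
    ascBelow σ i ≤ ascents σ := by
  rw [ascents_eq, ascBelow]
  refine card_le_card (fun j hj => ?_)
  simp only [mem_filter, mem_univ, true_and] at hj ⊢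
  exact hj.2

lemma ascBelow_le_val {n : ℕ} (σ : Equiv.Perm (Fin (n+1))) (i : Fin (n+1)) :
    ascBelow σ i ≤ (i : ℕ) := by
  rw [ascBelow]
  calc #(Finset.univ.filter fun j : Fin n => j.castSucc < i ∧ σ j.castSucc < σ j.succ)
      ≤ #(Finset.range (i : ℕ)) := by
        refine Finset.card_le_card_of_injOn (fun j => (j : ℕ)) ?_ ?_
        · intro j hj
          simp only [Finset.mem_coe, mem_filter, mem_univ, true_and] at hj
          simp only [Finset.mem_coe, mem_range]
          have := hj.1
          rwa [Fin.lt_def] at this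
        · exact fun x _ y _ h => Fin.val_injective h
    _ = (i : ℕ) := card_range _

lemma ascBelow_last {n : ℕ} (σ : Equiv.Perm (Fin (n+1))) :
    ascBelow σ (Fin.last n) = ascents σ := by
  rw [ascents_eq, ascBelow]
  congr 1
  apply filter_congr
  intro j _
  simp [Fin.castSucc_lt_last]

lemma ascBelow_step {n : ℕ} (σ : Equiv.Perm (Fin (n+1))) (i : Fin n) :
    ascBelow σ i.succ
      = ascBelow σ i.castSucc + (if σ i.castSucc < σ i.succ then 1 else 0) := by
  classical
  unfold ascBelow
  have hset : (univ.filter fun j : Fin n => j.castSucc < i.succ ∧ σ j.castSucc < σ j.succ)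
      = (univ.filter fun j : Fin n => j.castSucc < i.castSucc ∧ σ j.castSucc < σ j.succ)
        ∪ (univ.filter fun j : Fin n => j = i ∧ σ j.castSucc < σ j.succ) := by
    ext j
    simp only [mem_filter, mem_univ, true_and, mem_union]
    constructor
    · rintro ⟨hlt, hP⟩
      by_cases hji : j = i
      · exact Or.inr ⟨hji, hP⟩
      · refine Or.inl ⟨?_, hP⟩
        rw [Fin.lt_def] at hlt ⊢
        simp only [Fin.coe_castSucc, Fin.val_succ] at hlt ⊢
        have : (j : ℕ) ≠ (i : ℕ) := fun h => hji (Fin.val_injective h)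
        omega
    · rintro (⟨hlt, hP⟩ | ⟨hji, hP⟩)
      · refine ⟨?_, hP⟩
        rw [Fin.lt_def] at hlt ⊢
        simp only [Fin.coe_castSucc, Fin.val_succ] at hlt ⊢
        omega
      · subst hji
        exact ⟨Fin.castSucc_lt_succ (i := j), hP⟩
  rw [hset, Finset.card_union_of_disjoint]
  · congr 1
    by_cases hP : σ i.castSucc < σ i.succ
    · rw [if_pos hP]
      have : (univ.filter fun j : Fin n => j = i ∧ σ j.castSucc < σ j.succ) = {i} := by
        ext j
        simp only [mem_filter, mem_univ, true_and, mem_singleton]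
        exact ⟨fun h => h.1, fun h => ⟨h, h ▸ hP⟩⟩
      rw [this, card_singleton]
    · rw [if_neg hP]
      have : (univ.filter fun j : Fin n => j = i ∧ σ j.castSucc < σ j.succ) = ∅ := by
        ext j
        simp only [mem_filter, mem_univ, true_and, notMem_empty, iff_false, not_and]
        rintro rfl
        exact hP
      rw [this, card_empty]
  · rw [Finset.disjoint_left]
    rintro j hj1 hj2
    simp only [mem_filter, mem_univ, true_and] at hj1 hj2
    rcases hj2 with ⟨rfl, -⟩
    exact lt_irrefl _ hj1.1

lemma strictMono_val_le {m k : ℕ} {H : Fin m → Fin k} (h : StrictMono H) :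
    ∀ i : Fin m, (i : ℕ) ≤ (H i : ℕ) := by
  suffices hs : ∀ v : ℕ, ∀ i : Fin m, (i : ℕ) = v → v ≤ (H i : ℕ) by
    intro i; exact hs (i : ℕ) i rfl
  intro v
  induction v with
  | zero => intro i _; exact Nat.zero_le _
  | succ v ih =>
    intro i hiv
    have hv' : v < m := by have := i.isLt; omega
    have hlt : (⟨v, hv'⟩ : Fin m) < i := by rw [Fin.lt_def]; simp; omega
    have h1 := h hlt
    have h2 := ih ⟨v, hv'⟩ rfl
    rw [Fin.lt_def] at h1
    omega







/-- the strictified map associated to `f` in the fiber of `σ` -/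
def wmap {n N : ℕ} (σ : Equiv.Perm (Fin (n+1))) (f : Fin (n+1) → Fin N) (i : Fin (n+1)) :
    Fin (N + ascents σ) :=
  ⟨(f (σ i) : ℕ) + ascBelow σ i, by
    have h1 := (f (σ i)).isLt
    have h2 := ascBelow_le_ascents σ i
    omega⟩

lemma wmap_strictMono {n N : ℕ} (σ : Equiv.Perm (Fin (n+1))) (f : Fin (n+1) → Fin N)
    (hf : Tuple.sort f = σ) : StrictMono (wmap σ f) := by
  obtain ⟨hmono, hties⟩ := Tuple.eq_sort_iff.mp hf.symm
  refine Fin.strictMono_iff_lt_succ.mpr fun k => ?_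
  rw [Fin.lt_def]
  show (f (σ k.castSucc) : ℕ) + ascBelow σ k.castSucc
      < (f (σ k.succ) : ℕ) + ascBelow σ k.succ
  rw [ascBelow_step σ k]
  have hle : f (σ k.castSucc) ≤ f (σ k.succ) := hmono (le_of_lt (Fin.castSucc_lt_succ (i := k)))
  rw [Fin.le_def] at hle
  by_cases hasc : σ k.castSucc < σ k.succ
  · rw [if_pos hasc]; omega
  · have hne : f (σ k.castSucc) ≠ f (σ k.succ) :=
      fun h => hasc (hties _ _ (Fin.castSucc_lt_succ (i := k)) h)
    have hlt : (f (σ k.castSucc) : ℕ) < (f (σ k.succ) : ℕ) :=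
      lt_of_le_of_ne hle (fun h => hne (Fin.val_injective h))
    rw [if_neg hasc]; omega

lemma sigma_lt_adj {n : ℕ} (σ : Equiv.Perm (Fin (n+1))) (g : Fin (n+1) → ℕ)
    (hstep : ∀ k : Fin n, ¬ σ k.castSucc < σ k.succ → g k.castSucc < g k.succ) :
    ∀ i j : Fin (n+1), (j : ℕ) = (i : ℕ) + 1 → g i = g j → σ i < σ j := by
  intro i j hij hg
  have hi : (i : ℕ) < n := by have := j.isLt; omega
  have hik : i = (⟨(i : ℕ), hi⟩ : Fin n).castSucc := by ext; simp
  have hjk : j = (⟨(i : ℕ), hi⟩ : Fin n).succ := by ext; simp [hij]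
  by_contra hcon
  rw [hik, hjk] at hcon
  have := hstep ⟨(i : ℕ), hi⟩ hcon
  rw [← hik, ← hjk] at this
  omega

lemma sigma_lt_chain {n : ℕ} (σ : Equiv.Perm (Fin (n+1))) (g : Fin (n+1) → ℕ)
    (hmono : Monotone g)
    (hstep : ∀ k : Fin n, ¬ σ k.castSucc < σ k.succ → g k.castSucc < g k.succ) :
    ∀ i j : Fin (n+1), i < j → g i = g j → σ i < σ j := by
  suffices H : ∀ d : ℕ, ∀ i j : Fin (n+1), (j : ℕ) = (i : ℕ) + d + 1 → g i = g j → σ i < σ j by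
    intro i j hij hg
    have hlt : (i : ℕ) < (j : ℕ) := hij
    exact H ((j : ℕ) - (i : ℕ) - 1) i j (by omega) hg
  intro d
  induction d with
  | zero => exact fun i j hij hg => sigma_lt_adj σ g hstep i j (by omega) hg
  | succ d ih =>
    intro i j hij hg
    have hm : (i : ℕ) + d + 1 < n + 1 := by have := j.isLt; omega
    set m : Fin (n+1) := ⟨(i : ℕ) + d + 1, hm⟩ with hmdef
    have h1 : g i ≤ g m := hmono (by rw [Fin.le_def]; simp [hmdef]; omega)
    have h2 : g m ≤ g j := hmono (by rw [Fin.le_def]; simp [hmdef]; omega)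
    have hgm : g i = g m := by omega
    have hgj : g m = g j := by omega
    exact lt_trans (ih i m (by simp [hmdef]) hgm)
      (sigma_lt_adj σ g hstep m j (by simp [hmdef, hij]; ring) hgj)

lemma fiber_card {n N : ℕ} (σ : Equiv.Perm (Fin (n+1))) :
    #((univ : Finset (Fin (n+1) → Fin N)).filter fun f => Tuple.sort f = σ)
      = (N + ascents σ).choose (n+1) := by
  classical
  have htarget : (N + ascents σ).choose (n+1)
      = #(powersetCard (n+1) (univ : Finset (Fin (N + ascents σ)))) := by
    rw [card_powersetCard, card_univ, Fintype.card_fin]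
  rw [htarget]
  refine Finset.card_bij (fun f _ => Finset.image (wmap σ f) univ) ?_ ?_ ?_
  · intro f hf
    simp only [mem_filter, mem_univ, true_and] at hf
    rw [Finset.mem_powersetCard_univ,
      Finset.card_image_of_injective _ (wmap_strictMono σ f hf).injective, card_univ,
      Fintype.card_fin]
  · intro f hf f' hf' himg
    simp only [mem_filter, mem_univ, true_and] at hf hf'
    have hcard : #(Finset.image (wmap σ f) univ) = n+1 := by
      rw [Finset.card_image_of_injective _ (wmap_strictMono σ f hf).injective, card_univ,
        Fintype.card_fin]
    have h1 : wmap σ f = ⇑((Finset.image (wmap σ f) univ).orderEmbOfFin hcard) :=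
      Finset.orderEmbOfFin_unique hcard (fun x => Finset.mem_image_of_mem _ (mem_univ x))
        (wmap_strictMono σ f hf)
    have himg' : Finset.image (wmap σ f) univ = Finset.image (wmap σ f') univ := himg
    have h2 : wmap σ f' = ⇑((Finset.image (wmap σ f) univ).orderEmbOfFin hcard) := by
      refine Finset.orderEmbOfFin_unique hcard (fun x => ?_) (wmap_strictMono σ f' hf')
      rw [himg']
      exact Finset.mem_image_of_mem _ (mem_univ x)
    funext j
    have heq : wmap σ f (σ.symm j) = wmap σ f' (σ.symm j) := by rw [h1, h2]
    have hval := congrArg Fin.val heq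
    unfold wmap at hval
    simp only [Equiv.apply_symm_apply] at hval
    have : (f j : ℕ) = (f' j : ℕ) := by omega
    exact Fin.val_injective this
  · intro s hs
    rw [Finset.mem_powersetCard_univ] at hs
    have hHsm : StrictMono (s.orderEmbOfFin hs) := (s.orderEmbOfFin hs).strictMono
    set H : Fin (n+1) → Fin (N + ascents σ) := ⇑(s.orderEmbOfFin hs) with hH
    set g : Fin (n+1) → ℕ := fun i => (H i : ℕ) - ascBelow σ i with hg
    have hcle : ∀ i, ascBelow σ i ≤ (H i : ℕ) :=
      fun i => le_trans (ascBelow_le_val σ i) (strictMono_val_le hHsm i)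
    have hstep1 : ∀ k : Fin n, g k.castSucc ≤ g k.succ := by
      intro k
      have h1 : (H k.castSucc : ℕ) < (H k.succ : ℕ) := hHsm (Fin.castSucc_lt_succ (i := k))
      have h2 := ascBelow_step σ k
      have h3 : ascBelow σ k.succ ≤ ascBelow σ k.castSucc + 1 := by
        rw [h2]; split_ifs <;> omega
      have h6 := hcle k.castSucc
      simp only [hg]
      omega
    have hstep2 : ∀ k : Fin n, ¬ σ k.castSucc < σ k.succ → g k.castSucc < g k.succ := by
      intro k hk
      have h1 : (H k.castSucc : ℕ) < (H k.succ : ℕ) := hHsm (Fin.castSucc_lt_succ (i := k))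
      have h2 := ascBelow_step σ k
      rw [if_neg hk] at h2
      have h6 := hcle k.castSucc
      simp only [hg]
      omega
    have hmono : Monotone g := Fin.monotone_iff_le_succ.mpr hstep1
    have hbound : ∀ i, g i < N := by
      intro i
      have h1 : g i ≤ g (Fin.last n) := hmono (Fin.le_last i)
      have h2 : g (Fin.last n) < N := by
        have h3 : (H (Fin.last n) : ℕ) < N + ascents σ := (H (Fin.last n)).isLt
        have h4 : ascents σ ≤ (H (Fin.last n) : ℕ) := by
          have h5 := strictMono_val_le hHsm (Fin.last n)
          have h6 := ascents_le σ
          simp only [Fin.val_last] at h5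
          omega
        show (H (Fin.last n) : ℕ) - ascBelow σ (Fin.last n) < N
        rw [ascBelow_last]
        omega
      omega
    refine ⟨fun j => ⟨g (σ.symm j), hbound _⟩, ?_, ?_⟩
    · simp only [mem_filter, mem_univ, true_and]
      refine (Tuple.eq_sort_iff.mpr ⟨?_, ?_⟩).symm
      · refine Fin.monotone_iff_le_succ.mpr fun k => ?_
        show (⟨g (σ.symm (σ k.castSucc)), _⟩ : Fin N) ≤ ⟨g (σ.symm (σ k.succ)), _⟩
        simp only [Equiv.symm_apply_apply]
        rw [Fin.le_def]
        exact hstep1 k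
      · intro i j hij hfe
        simp only [Equiv.symm_apply_apply, Fin.mk.injEq] at hfe
        exact sigma_lt_chain σ g hmono hstep2 i j hij hfe
    · have hwH : wmap σ (fun j => ⟨g (σ.symm j), hbound _⟩) = H := by
        funext i
        apply Fin.val_injective
        show ((⟨g (σ.symm (σ i)), _⟩ : Fin N) : ℕ) + ascBelow σ i = (H i : ℕ)
        simp only [Equiv.symm_apply_apply]
        have := hcle i
        simp only [hg]
        omega
      show Finset.image (wmap σ (fun j => ⟨g (σ.symm j), hbound _⟩)) univ = s
      rw [hwH]
      apply Finset.coe_injective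
      rw [Finset.coe_image, Finset.coe_univ, Set.image_univ, hH, Finset.range_orderEmbOfFin]

lemma worpitzky (n N : ℕ) :
    N ^ n = ∑ σ : Equiv.Perm (Fin n), (N + ascents σ).choose n := by
  classical
  cases n with
  | zero => simp
  | succ n =>
    have h1 : N ^ (n+1) = #(univ : Finset (Fin (n+1) → Fin N)) := by
      rw [card_univ, Fintype.card_fun, Fintype.card_fin, Fintype.card_fin]
    rw [h1, Finset.card_eq_sum_card_fiberwise
      (f := fun f : Fin (n+1) → Fin N => Tuple.sort f) (t := univ) (fun f _ => mem_univ _)]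
    exact Finset.sum_congr rfl fun σ _ => fiber_card σ



lemma coeff_exp_sub_one_pow (k m : ℕ) :
    PowerSeries.coeff (R := ℚ) k ((PowerSeries.exp ℚ - 1)^m)
      = (1 / k.factorial) *
          ∑ j ∈ range (m+1), (-1:ℚ)^(m-j) * (m.choose j : ℚ) * (j:ℚ)^k := by
  rw [sub_eq_add_neg, add_pow, map_sum, Finset.mul_sum]
  refine Finset.sum_congr rfl fun j _ => ?_
  have hneg : (-1 : PowerSeries ℚ) = PowerSeries.C (R := ℚ) (-1) := by simp
  have hnat : ((m.choose j : ℕ) : PowerSeries ℚ) = PowerSeries.C (R := ℚ) ((m.choose j : ℕ) : ℚ) :=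
    (map_natCast (PowerSeries.C (R := ℚ)) (m.choose j)).symm
  rw [hneg, ← map_pow, hnat, mul_assoc, ← map_mul, PowerSeries.coeff_mul_C,
    PowerSeries.exp_pow_eq_rescale_exp, PowerSeries.coeff_rescale, PowerSeries.coeff_exp]
  simp only [Algebra.algebraMap_self, RingHom.id_apply]
  ring









/-- Worpitzky identity over ℚ, grouped by number of ascents. -/
lemma worp_q (n j : ℕ) :
    ((j:ℚ))^(n+1) = ∑ a ∈ range (n+1), (Eul (n+1) a : ℚ) * (((j+a).choose (n+1) : ℕ) : ℚ) := by
  rw [← sum_perm_eq_sum_Eul (fun a => (((j+a).choose (n+1) : ℕ) : ℚ))]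
  exact_mod_cast worpitzky (n+1) j

/-- the inner alternating sum evaluates via finite differences -/
lemma inner_eq (n m a : ℕ) (hm : 1 ≤ m) (hmn : m ≤ n+2) :
    ∑ j ∈ range (m+1), (-1:ℚ)^(m-j) * (m.choose j : ℚ) * (j:ℚ) * (((j+a).choose (n+1) : ℕ) : ℚ)
      = (m : ℚ) * (((a+1).choose (n+2-m) : ℕ) : ℚ) := by
  rw [Finset.sum_range_succ' _ m]
  have hzero : (-1:ℚ)^(m-0) * (m.choose 0 : ℚ) * ((0:ℕ):ℚ) * (((0+a).choose (n+1) : ℕ) : ℚ) = 0 := by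
    simp
  rw [hzero, add_zero]
  have hterm : ∀ i ∈ range m,
      (-1:ℚ)^(m-(i+1)) * (m.choose (i+1) : ℚ) * ((i+1:ℕ):ℚ) * ((((i+1)+a).choose (n+1) : ℕ) : ℚ)
        = (m:ℚ) * ((-1:ℚ)^(m-1) * ((-1:ℚ)^i * ((m-1).choose i : ℚ) * (((a+1+i).choose (n+1) : ℕ) : ℚ))) := by
    intro i hi
    rw [mem_range] at hi
    have h1 : m - (i+1) = (m-1) - i := by omega
    have hsq : (-1:ℚ)^i * (-1:ℚ)^i = 1 := by
      rw [← pow_add, ← two_mul, pow_mul]; norm_num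
    have h2 : (-1:ℚ)^((m-1)-i) * (-1:ℚ)^i = (-1:ℚ)^(m-1) := by
      rw [← pow_add]; congr 1; omega
    have h2' : (-1:ℚ)^((m-1)-i) = (-1:ℚ)^(m-1) * (-1:ℚ)^i := by
      rw [← h2, mul_assoc, hsq, mul_one]
    have h3 : (m:ℚ) * ((m-1).choose i : ℚ) = (m.choose (i+1) : ℚ) * ((i+1:ℕ):ℚ) := by
      have h4 : m * ((m-1).choose i) = m.choose (i+1) * (i+1) := by
        obtain ⟨m', rfl⟩ : ∃ m', m = m' + 1 := ⟨m-1, by omega⟩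
        simpa using Nat.add_one_mul_choose_eq m' i
      exact_mod_cast h4
    have h5 : (i+1) + a = a + 1 + i := by omega
    rw [h1, h2', h5]
    push_cast at h3 ⊢
    linear_combination (-((-1:ℚ)^(m-1) * (-1:ℚ)^i * (((a+1+i).choose (n+1) : ℕ) : ℚ))) * h3
  rw [Finset.sum_congr rfl hterm, ← Finset.mul_sum, ← Finset.mul_sum]
  have hr : range m = range ((m-1)+1) := by congr 1; omega
  have hfd : ∑ i ∈ range m, (-1:ℚ)^i * ((m-1).choose i : ℚ) * (((a+1+i).choose (n+1) : ℕ) : ℚ)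
      = fdS (m-1) (n+1) (a+1) := by
    rw [hr, fdS]
  rw [hfd, fdS_eq, if_pos (by omega : m - 1 ≤ n + 1)]
  have h6 : (n+1) - (m-1) = n+2-m := by omega
  rw [h6]
  have hsq : (-1:ℚ)^(m-1) * (-1:ℚ)^(m-1) = 1 := by
    rw [← pow_add, ← two_mul, pow_mul]; norm_num
  calc (m:ℚ) * ((-1:ℚ)^(m-1) * ((-1:ℚ)^(m-1) * (((a+1).choose (n+2-m) : ℕ) : ℚ)))
      = (m:ℚ) * (((a+1).choose (n+2-m) : ℕ) : ℚ) * ((-1:ℚ)^(m-1) * (-1:ℚ)^(m-1)) := by ring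
    _ = (m:ℚ) * (((a+1).choose (n+2-m) : ℕ) : ℚ) := by rw [hsq, mul_one]

/-- the reflection step using Eulerian symmetry -/
lemma comb (n m : ℕ) (hm1 : 1 ≤ m) (hm2 : m ≤ n + 2) :
    ∑ a ∈ range (n+1), (if a + 1 ≤ m then (Eul (n+1) a : ℚ) * (((n+1-a).choose (m-1-a) : ℕ) : ℚ) else 0)
      = ∑ a ∈ range (n+1), (Eul (n+1) a : ℚ) * (((a+1).choose (n+2-m) : ℕ) : ℚ) := by
  rw [Finset.sum_nbij' (i := fun a => n - a) (j := fun a => n - a)]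
  · intro a ha
    rw [mem_range] at ha
    rw [mem_range]; omega
  · intro a ha
    rw [mem_range] at ha
    rw [mem_range]; omega
  · intro a ha; rw [mem_range] at ha; omega
  · intro a ha; rw [mem_range] at ha; omega
  · intro a ha
    rw [mem_range] at ha
    have hsym : Eul (n+1) (n - a) = Eul (n+1) a := by
      rw [← Eul_symm n a (by omega)]
    rw [hsym]
    by_cases h : a + 1 ≤ m
    · rw [if_pos h]
      congr 1
      have he1 : n + 1 - a = n - a + 1 := by omega
      have he2 : m - 1 - a ≤ n - a + 1 := by omega
      have he3 : (n - a + 1) - (m - 1 - a) = n + 2 - m := by omega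
      rw [he1, ← he3, Nat.choose_symm he2]
    · rw [if_neg h]
      have hz : n - a + 1 < n + 2 - m := by omega
      rw [Nat.choose_eq_zero_of_lt hz]
      simp

lemma key (k m : ℕ) (hk : 2 ≤ k) (hm : 1 ≤ m) (hmk : m ≤ k) :
    (∑ ν ∈ Icc 1 (k-1), if ν ≤ m then lam k ν / (k:ℚ) * (((k-ν).choose (m-ν) : ℕ) : ℚ) else 0)
      = PowerSeries.coeff (R := ℚ) k ((PowerSeries.exp ℚ - 1)^m) / m := by
  obtain ⟨n, rfl⟩ : ∃ n, k = n + 2 := ⟨k - 2, by omega⟩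
  have hmk' : m ≤ n + 2 := hmk
  have hlam : ∀ ν : ℕ, lam (n+2) ν = (Eul (n+1) (ν-1) : ℚ) / ((n+1).factorial : ℚ) := by
    intro ν; rfl
  set T : ℚ := ∑ a ∈ range (n+1), (Eul (n+1) a : ℚ) * (((a+1).choose (n+2-m) : ℕ) : ℚ) with hT
  have hL : (∑ ν ∈ Icc 1 (n+2-1),
        if ν ≤ m then lam (n+2) ν / ((n+2 : ℕ):ℚ) * (((n+2-ν).choose (m-ν) : ℕ) : ℚ) else 0)
      = (1/(((n+1).factorial : ℚ) * ((n+2 : ℕ):ℚ))) * T := by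
    have hicc : n + 2 - 1 = n + 1 := by omega
    rw [hicc, show Icc 1 (n+1) = Ico 1 (n+2) from (Finset.Ico_add_one_right_eq_Icc 1 (n+1)).symm,
      Finset.sum_Ico_eq_sum_range]
    have hrange : n + 2 - 1 = n + 1 := by omega
    rw [hrange]
    conv_rhs => rw [hT, ← comb n m hm hmk']
    rw [Finset.mul_sum]
    refine Finset.sum_congr rfl fun a ha => ?_
    have h1 : 1 + a = a + 1 := by omega
    have h2 : n + 2 - (a + 1) = n + 1 - a := by omega
    have h3 : m - (a + 1) = m - 1 - a := by omega
    rw [h1, h2, h3, hlam]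
    have h4 : a + 1 - 1 = a := by omega
    rw [h4]
    split_ifs with hc
    · have hf : ((n+1).factorial : ℚ) ≠ 0 := by exact_mod_cast (n+1).factorial_ne_zero
      have hn2 : ((n+2 : ℕ) : ℚ) ≠ 0 := by positivity
      field_simp
    · simp
  have hR : PowerSeries.coeff (R := ℚ) (n+2) ((PowerSeries.exp ℚ - 1)^m) / m
      = (1/(((n+1).factorial : ℚ) * ((n+2 : ℕ):ℚ))) * T := by
    rw [coeff_exp_sub_one_pow]
    have hsum : (∑ j ∈ range (m+1), (-1:ℚ)^(m-j) * (m.choose j : ℚ) * (j:ℚ)^(n+2))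
        = (m:ℚ) * T := by
      calc (∑ j ∈ range (m+1), (-1:ℚ)^(m-j) * (m.choose j : ℚ) * (j:ℚ)^(n+2))
          = ∑ j ∈ range (m+1), ∑ a ∈ range (n+1),
              ((-1:ℚ)^(m-j) * (m.choose j : ℚ) * (j:ℚ))
                * ((Eul (n+1) a : ℚ) * (((j+a).choose (n+1) : ℕ) : ℚ)) := by
            refine Finset.sum_congr rfl fun j _ => ?_
            have hp : ((j:ℚ))^(n+2) = ((j:ℚ))^(n+1) * (j:ℚ) := by rw [pow_succ]
            rw [hp, worp_q n j, Finset.sum_mul, Finset.mul_sum]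
            exact Finset.sum_congr rfl fun a _ => by ring
        _ = ∑ a ∈ range (n+1), ∑ j ∈ range (m+1),
              ((-1:ℚ)^(m-j) * (m.choose j : ℚ) * (j:ℚ))
                * ((Eul (n+1) a : ℚ) * (((j+a).choose (n+1) : ℕ) : ℚ)) := Finset.sum_comm
        _ = ∑ a ∈ range (n+1), (Eul (n+1) a : ℚ)
              * ((m:ℚ) * (((a+1).choose (n+2-m) : ℕ) : ℚ)) := by
            refine Finset.sum_congr rfl fun a _ => ?_
            rw [← inner_eq n m a hm hmk', Finset.mul_sum]
            exact Finset.sum_congr rfl fun j _ => by ring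
        _ = (m:ℚ) * T := by
            rw [hT, Finset.mul_sum]
            exact Finset.sum_congr rfl fun a _ => by ring
    rw [hsum]
    have hfac : (((n+2).factorial : ℕ) : ℚ)
        = ((n+2 : ℕ) : ℚ) * (((n+1).factorial : ℕ) : ℚ) := by
      rw [show (n+2).factorial = (n+2) * (n+1).factorial from rfl]
      push_cast
      ring
    have hm0 : (m:ℚ) ≠ 0 := by positivity
    have hf : ((n+1).factorial : ℚ) ≠ 0 := by exact_mod_cast (n+1).factorial_ne_zero
    have hf2 : (((n+2).factorial : ℕ) : ℚ) ≠ 0 := by exact_mod_cast (n+2).factorial_ne_zero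
    rw [hfac]
    field_simp
  exact hL.trans hR.symm








lemma coeff_trace_matLn (b k : ℕ) (A : Matrix (Fin b) (Fin b) ℚ) :
    PowerSeries.coeff (R := ℚ) k
        (Matrix.trace (matLn (1 + (1 - PowerSeries.exp ℚ) • A.map (PowerSeries.C (R := ℚ)))))
      = ∑ m ∈ Icc 1 k, (((-1:ℚ)^(m-1) / m) *
          ((-1:ℚ)^m * PowerSeries.coeff (R := ℚ) k ((PowerSeries.exp ℚ - 1)^m))) *
            Matrix.trace (A^m) := by
  set M := 1 + (1 - PowerSeries.exp ℚ) • A.map (PowerSeries.C (R := ℚ)) with hMdef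
  have hM : M - 1 = (1 - PowerSeries.exp ℚ) • A.map (PowerSeries.C (R := ℚ)) := by
    rw [hMdef]; exact add_sub_cancel_left 1 _
  have hpow : ∀ m : ℕ, (M - 1)^m
      = ((1 - PowerSeries.exp ℚ)^m) • (A^m).map (PowerSeries.C (R := ℚ)) := by
    intro m
    rw [hM, smul_pow]
    congr 1
    rw [show A.map (PowerSeries.C (R := ℚ)) = (PowerSeries.C (R := ℚ)).mapMatrix A from rfl, ← map_pow]
    rfl
  have hcoeffpow : ∀ m : ℕ, ∀ i : Fin b,
      PowerSeries.coeff (R := ℚ) k (((M - 1)^m) i i)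
        = ((-1:ℚ)^m * PowerSeries.coeff (R := ℚ) k ((PowerSeries.exp ℚ - 1)^m)) * (A^m) i i := by
    intro m i
    rw [hpow m]
    have h1 : (((1 - PowerSeries.exp ℚ)^m) • (A^m).map (PowerSeries.C (R := ℚ))) i i
        = (1 - PowerSeries.exp ℚ)^m * PowerSeries.C (R := ℚ) ((A^m) i i) := by
      simp [Matrix.smul_apply, Matrix.map_apply, smul_eq_mul]
    rw [h1, PowerSeries.coeff_mul_C]
    have h2 : (1 - PowerSeries.exp ℚ) = -(PowerSeries.exp ℚ - 1) := (neg_sub _ _).symm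
    rw [h2, neg_pow]
    have h3 : ((-1 : PowerSeries ℚ))^m = PowerSeries.C (R := ℚ) ((-1:ℚ)^m) := by
      rw [map_pow]; congr 1; simp
    rw [h3, PowerSeries.coeff_C_mul]
  have htr : Matrix.trace (matLn M) = ∑ i : Fin b, (matLn M) i i := rfl
  rw [htr, map_sum]
  have hdiag : ∀ i : Fin b, PowerSeries.coeff (R := ℚ) k ((matLn M) i i)
      = ∑ m ∈ Icc 1 k, ((-1:ℚ)^(m-1) / m) * PowerSeries.coeff (R := ℚ) k (((M - 1)^m) i i) := by
    intro i
    rw [show (matLn M) i i = PowerSeries.mk (fun a => ∑ m ∈ Finset.Icc 1 a,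
      ((-1 : ℚ) ^ (m - 1) / (m : ℚ)) * PowerSeries.coeff (R := ℚ) a (((M - 1) ^ m) i i)) from rfl,
      PowerSeries.coeff_mk]
  rw [Finset.sum_congr rfl fun i _ => hdiag i, Finset.sum_comm]
  refine Finset.sum_congr rfl fun m _ => ?_
  rw [Finset.sum_congr rfl fun i (_ : i ∈ univ) => by rw [hcoeffpow m i]]
  rw [← Finset.mul_sum, ← Finset.mul_sum]
  have : Matrix.trace (A^m) = ∑ i : Fin b, (A^m) i i := rfl
  rw [this]
  ring

lemma lhs_expand (b k : ℕ) (hk : 2 ≤ k) (A : Matrix (Fin b) (Fin b) ℚ) :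
    ∑ ν ∈ Icc 1 (k-1), lam k ν / (k:ℚ) * Matrix.trace (A ^ ν * (A + 1) ^ (k - ν))
      = ∑ m ∈ Icc 1 k, (∑ ν ∈ Icc 1 (k-1),
          if ν ≤ m then lam k ν / (k:ℚ) * (((k-ν).choose (m-ν) : ℕ) : ℚ) else 0)
            * Matrix.trace (A^m) := by
  have step1 : ∀ ν ∈ Icc 1 (k-1),
      Matrix.trace (A ^ ν * (A + 1) ^ (k - ν))
        = ∑ m ∈ Icc ν k, (((k-ν).choose (m-ν) : ℕ) : ℚ) * Matrix.trace (A^m) := by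
    intro ν hν
    rw [mem_Icc] at hν
    have hc : Commute A (1 : Matrix (Fin b) (Fin b) ℚ) := Commute.one_right A
    rw [hc.add_pow (k - ν), Finset.mul_sum, Matrix.trace_sum]
    refine Finset.sum_nbij' (fun j => ν + j) (fun m => m - ν) ?_ ?_ ?_ ?_ ?_
    · intro j hj
      rw [mem_range] at hj
      show ν + j ∈ Icc ν k
      rw [mem_Icc]; omega
    · intro m hm
      rw [mem_Icc] at hm
      show m - ν ∈ range (k - ν + 1)
      rw [mem_range]; omega
    · intro j hj
      rw [mem_range] at hj
      show ν + j - ν = j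
      omega
    · intro m hm
      rw [mem_Icc] at hm
      show ν + (m - ν) = m
      omega
    intro j hj
    rw [mem_range] at hj
    show (A ^ ν * (A ^ j * 1 ^ (k - ν - j) * ((k-ν).choose j : Matrix (Fin b) (Fin b) ℚ))).trace
      = (((k-ν).choose (ν + j - ν) : ℕ) : ℚ) * (A ^ (ν + j)).trace
    have h1 : A ^ ν * (A ^ j * 1 ^ (k - ν - j) * ((k-ν).choose j : Matrix (Fin b) (Fin b) ℚ))
        = ((k-ν).choose j : Matrix (Fin b) (Fin b) ℚ) * A ^ (ν + j) := by
      rw [one_pow, mul_one, ← mul_assoc, ← pow_add]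
      exact (Nat.cast_commute ((k-ν).choose j) (A ^ (ν + j))).symm
    have h2 : ν + j - ν = j := by omega
    rw [h1, ← nsmul_eq_mul, Matrix.trace_smul, h2, nsmul_eq_mul]
  rw [Finset.sum_congr rfl fun ν hν => by rw [step1 ν hν]]
  have step2 : ∀ ν ∈ Icc 1 (k-1),
      lam k ν / (k:ℚ) * ∑ m ∈ Icc ν k, (((k-ν).choose (m-ν) : ℕ) : ℚ) * Matrix.trace (A^m)
        = ∑ m ∈ Icc 1 k, (if ν ≤ m then
            lam k ν / (k:ℚ) * (((k-ν).choose (m-ν) : ℕ) : ℚ) * Matrix.trace (A^m) else 0) := by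
    intro ν hν
    rw [mem_Icc] at hν
    rw [Finset.mul_sum]
    rw [← Finset.sum_filter]
    have hfil : (Icc 1 k).filter (fun m => ν ≤ m) = Icc ν k := by
      ext m
      simp only [mem_filter, mem_Icc]
      omega
    rw [hfil]
    exact Finset.sum_congr rfl fun m _ => by ring
  rw [Finset.sum_congr rfl step2, Finset.sum_comm]
  refine Finset.sum_congr rfl fun m _ => ?_
  rw [Finset.sum_mul]
  refine Finset.sum_congr rfl fun ν _ => ?_
  rw [ite_mul, zero_mul]

/-- For a `b×b` matrix `A` over `ℚ` and `B = A + I`, in `ℚ[[h]]`: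
`Σ_{k≥2} Σ_{ν=1}^{k−1} (λ_{k,ν}/k)·h^k·Tr(A^ν B^{k−ν})
  = −h·Tr(A) − Tr(Ln(I + (1−e^h)·A))`. -/
theorem trace_series_eq_trace_matLn (b : ℕ) (A : Matrix (Fin b) (Fin b) ℚ) :
    (PowerSeries.mk fun k =>
        if 2 ≤ k then
          ∑ ν ∈ Finset.Icc 1 (k - 1),
            lam k ν / (k : ℚ) * Matrix.trace (A ^ ν * (A + 1) ^ (k - ν))
        else 0) =
      -(PowerSeries.C (R := ℚ) (Matrix.trace A)) * PowerSeries.X -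
        Matrix.trace (matLn (1 + (1 - PowerSeries.exp ℚ) • A.map (PowerSeries.C (R := ℚ)))) := by
  ext k
  rw [PowerSeries.coeff_mk, map_sub, coeff_trace_matLn b k A]
  have hX : PowerSeries.coeff (R := ℚ) k (-(PowerSeries.C (R := ℚ) (Matrix.trace A)) * PowerSeries.X)
      = -(Matrix.trace A * (if k = 1 then 1 else 0)) := by
    rw [neg_mul, map_neg, PowerSeries.coeff_C_mul, PowerSeries.coeff_X]
  rw [hX]
  match k, Nat.lt_or_ge k 2 with
  | 0, _ =>
    simp
  | 1, _ =>
    rw [if_neg (by omega)]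
    have h1 : Icc 1 1 = {1} := rfl
    rw [h1, Finset.sum_singleton]
    rw [coeff_exp_sub_one_pow 1 1]
    simp [Finset.sum_range_succ]
  | (k+2), _ =>
    rw [if_pos (by omega), if_neg (by omega), lhs_expand b (k+2) (by omega) A]
    rw [mul_zero, neg_zero, zero_sub, ← Finset.sum_neg_distrib]
    refine Finset.sum_congr rfl fun m hm => ?_
    rw [mem_Icc] at hm
    rw [key (k+2) m (by omega) hm.1 hm.2]
    have hsq : (-1:ℚ)^(m-1) * (-1:ℚ)^m = -1 := by
      have h1 : m - 1 + m = 2*(m-1) + 1 := by omega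
      rw [← pow_add, h1, pow_succ, pow_mul]
      norm_num
    have hm0 : (m:ℚ) ≠ 0 := by
      have := hm.1; positivity
    field_simp
    linear_combination (PowerSeries.coeff (R := ℚ) (k+2) ((PowerSeries.exp ℚ - 1)^m)
      * Matrix.trace (A^m)) * hsq
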